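/- Let p : Y → X be a map with continuous lifting of paths and homotopies. Then: (a) p induces a covering morphism of fundamental groupoids πp : πY → πX (i.e., for each y ∈ Y the map from homotopy classes of paths in Y starting at y to homotopy classes of paths in X starting at p(y) is a bijection); and (b) for p(y₁) = x₁, p(y₂) = x₂ and a path β from x₁ to x₂, the class [β] lies in the image of πp : πY(y₁,y₂) → πX(x₁,x₂) if and only if the unique lift of β starting at y₁ ends at y₂. -/

import Mathlib

open Topology

open unitInterval

variable {X Y : Type*} [TopologicalSpace X] [TopologicalSpace Y]

/-- The space of paths in `X` starting at `x`, with the compact-open topology. -/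
abbrev PathsFrom (X : Type*) [TopologicalSpace X] (x : X) : Type _ :=
  {α : C(I, X) // α 0 = x}

/-- Postcomposition `𝒫p : (𝒫Y)_y → (𝒫X)_{p(y)}`. -/
def pathPost (p : C(Y, X)) (y : Y) (α : PathsFrom Y y) : PathsFrom X (p y) :=
  ⟨p.comp α.1, by simp [α.2]⟩

/-- The space of homotopies of paths starting at `x` (the initial-endpoint edge is fixed at `x`),
with the compact-open topology. -/
abbrev HtpysFrom (X : Type*) [TopologicalSpace X] (x : X) : Type _ :=
  {φ : C(I × I, X) // ∀ s, φ (s, 0) = x}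

/-- Postcomposition `Φp : (ΦY)_y → (ΦX)_{p(y)}`. -/
def htpyPost (p : C(Y, X)) (y : Y) (φ : HtpysFrom Y y) : HtpysFrom X (p y) :=
  ⟨p.comp φ.1, by simp [φ.2]⟩

/-- A semicovering map: a local homeomorphism with continuous lifting of paths and homotopies. -/
structure IsSemicoveringMap (p : C(Y, X)) : Prop where
  isLocalHomeomorph : IsLocalHomeomorph p
  pathLifting : ∀ y : Y, IsHomeomorph (pathPost p y)
  htpyLifting : ∀ y : Y, IsHomeomorph (htpyPost p y)

attribute [local instance] Path.Homotopic.setoid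

/-- Uniqueness of path lifts. -/
lemma lift_unique {p : C(Y, X)} (hpath : ∀ y : Y, IsHomeomorph (pathPost p y)) (y : Y)
    (γ₀ γ₁ : C(I, Y)) (h0 : γ₀ 0 = y) (h1 : γ₁ 0 = y) (h : p.comp γ₀ = p.comp γ₁) :
    γ₀ = γ₁ := by
  have := (hpath y).bijective.injective
    (a₁ := ⟨γ₀, h0⟩) (a₂ := ⟨γ₁, h1⟩) (by simp [pathPost, h])
  exact congrArg Subtype.val this

/-- Existence of path lifts. -/
lemma lift_exists {p : C(Y, X)} (hpath : ∀ y : Y, IsHomeomorph (pathPost p y)) (y : Y)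
    (β : C(I, X)) (hβ : β 0 = p y) : ∃ γ : C(I, Y), γ 0 = y ∧ p.comp γ = β := by
  obtain ⟨⟨γ, hγ0⟩, hγ⟩ := (hpath y).bijective.surjective ⟨β, hβ⟩
  exact ⟨γ, hγ0, congrArg Subtype.val hγ⟩

/-- The key lemma: a homotopy of paths rel endpoints lifts, lifts of homotopic paths
have the same endpoint, and the lifted homotopy is rel endpoints. -/
lemma key {p : C(Y, X)} (hpath : ∀ y : Y, IsHomeomorph (pathPost p y))
    (hhtpy : ∀ y : Y, IsHomeomorph (htpyPost p y)) (y : Y)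
    (γ₀ γ₁ : C(I, Y)) (h0 : γ₀ 0 = y) (h1 : γ₁ 0 = y)
    (H : C(I × I, X)) (hbot : ∀ s, H (s, 0) = p y) (htop : ∀ s, H (s, 1) = H (0, 1))
    (hleft : ∀ t, H (0, t) = p (γ₀ t)) (hright : ∀ t, H (1, t) = p (γ₁ t)) :
    γ₀ 1 = γ₁ 1 ∧ ∃ G : C(I × I, Y), (∀ s, G (s, 0) = y) ∧ (∀ s, G (s, 1) = γ₀ 1) ∧
      (∀ t, G (0, t) = γ₀ t) ∧ (∀ t, G (1, t) = γ₁ t) := by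
  obtain ⟨⟨G, hG0⟩, hG⟩ := (hhtpy y).bijective.surjective ⟨H, hbot⟩
  have hG' : p.comp G = H := congrArg Subtype.val hG
  have hGfun : ∀ z, p (G z) = H z := fun z => congrFun (congrArg (⇑) hG') z
  -- edge maps
  have hedge : ∀ s : I, (G.comp ⟨fun t => (s, t), by fun_prop⟩) 0 = y := fun s => hG0 s
  have hleft' : G.comp ⟨fun t => ((0 : I), t), by fun_prop⟩ = γ₀ := by
    apply lift_unique hpath y _ _ (hedge 0) h0
    ext t
    simp only [ContinuousMap.comp_apply, ContinuousMap.coe_mk]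
    rw [hGfun, hleft]
  have hright' : G.comp ⟨fun t => ((1 : I), t), by fun_prop⟩ = γ₁ := by
    apply lift_unique hpath y _ _ (hedge 1) h1
    ext t
    simp only [ContinuousMap.comp_apply, ContinuousMap.coe_mk]
    rw [hGfun, hright]
  have hleft'' : ∀ t, G (0, t) = γ₀ t := fun t => congrFun (congrArg (⇑) hleft') t
  have hright'' : ∀ t, G (1, t) = γ₁ t := fun t => congrFun (congrArg (⇑) hright') t
  -- the top edge is constant
  have htopc : G.comp ⟨fun s => (s, (1 : I)), by fun_prop⟩
      = ContinuousMap.const I (γ₀ 1) := by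
    apply lift_unique hpath (γ₀ 1) _ _ (by simp [hleft'']) rfl
    ext s
    simp only [ContinuousMap.comp_apply, ContinuousMap.coe_mk, ContinuousMap.const_apply]
    rw [hGfun, htop, hleft 1]
  have htop' : ∀ s, G (s, 1) = γ₀ 1 := fun s => congrFun (congrArg (⇑) htopc) s
  refine ⟨?_, G, hG0, htop', hleft'', hright''⟩
  rw [← hright'' 1, htop' 1]


/-- Unpacking a `HEq` of path-homotopy classes into a raw homotopy. -/
lemma heq_homotopic {X : Type*} [TopologicalSpace X] {x a b : X} (h : a = b)
    (f₀ : Path x a) (f₁ : Path x b)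
    (hq : HEq (⟦f₀⟧ : Path.Homotopic.Quotient x a) (⟦f₁⟧ : Path.Homotopic.Quotient x b)) :
    ∃ H : C(I × I, X), (∀ s, H (s, 0) = x) ∧ (∀ s, H (s, 1) = H (0, 1)) ∧
      (∀ t, H (0, t) = f₀ t) ∧ (∀ t, H (1, t) = f₁ t) := by
  subst h
  obtain ⟨F⟩ : Path.Homotopic f₀ f₁ := Quotient.exact (eq_of_heq hq)
  refine ⟨F.toHomotopy.toContinuousMap, ?_, ?_, ?_, ?_⟩
  · intro s
    have := F.eq_fst s (show (0 : I) ∈ ({0, 1} : Set I) from Or.inl rfl)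
    simpa using this
  · intro s
    have h1 := F.eq_fst s (show (1 : I) ∈ ({0, 1} : Set I) from Or.inr rfl)
    have h2 := F.eq_fst 0 (show (1 : I) ∈ ({0, 1} : Set I) from Or.inr rfl)
    simp only [ContinuousMap.Homotopy.coe_toContinuousMap,
      ContinuousMap.HomotopyWith.coe_toHomotopy]
    rw [h1, h2]
  · intro t; simpa using F.apply_zero t
  · intro t; simpa using F.apply_one t

theorem continuous_lifting_covering_morphism {X Y : Type*} [TopologicalSpace X]
    [TopologicalSpace Y] (p : C(Y, X))
    (hpath : ∀ y : Y, IsHomeomorph (pathPost p y))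
    (hhtpy : ∀ y : Y, IsHomeomorph (htpyPost p y)) :
    (∀ y : Y, Function.Bijective
      (fun z : Σ y₂ : Y, Path.Homotopic.Quotient y y₂ =>
        (⟨p z.1, Path.Homotopic.Quotient.map z.2 p⟩ : Σ x₂ : X, Path.Homotopic.Quotient (p y) x₂))) ∧
    (∀ (y₁ y₂ : Y) (β : Path (p y₁) (p y₂)),
      ((∃ q : Path.Homotopic.Quotient y₁ y₂, Path.Homotopic.Quotient.map q p = ⟦β⟧) ↔
        (∀ γ : C(I, Y), γ 0 = y₁ → p.comp γ = β.toContinuousMap → γ 1 = y₂))) := by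
  constructor
  · intro y
    constructor
    · -- injectivity
      rintro ⟨y₂, q⟩ ⟨y₂', q'⟩ h
      obtain ⟨α, rfl⟩ := Quotient.exists_rep q
      obtain ⟨α', rfl⟩ := Quotient.exists_rep q'
      simp only [← Path.Homotopic.Quotient.mk_map] at h
      have hfst : p y₂ = p y₂' := congrArg Sigma.fst h
      have hsnd : HEq (⟦α.map p.continuous⟧ : Path.Homotopic.Quotient (p y) (p y₂))
          (⟦α'.map p.continuous⟧ : Path.Homotopic.Quotient (p y) (p y₂')) :=
        (Sigma.mk.inj_iff.mp h).2
      obtain ⟨H, hbot, htop, hleftH, hrightH⟩ :=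
        heq_homotopic hfst (α.map p.continuous) (α'.map p.continuous) hsnd
      obtain ⟨hend, G, hG0, hG1, hGl, hGr⟩ :=
        key hpath hhtpy y α.toContinuousMap α'.toContinuousMap (by simp) (by simp)
          H (by simpa using hbot) htop (by simpa using hleftH) (by simpa using hrightH)
      have e : y₂ = y₂' := by simpa using hend
      subst e
      have hquot : (⟦α⟧ : Path.Homotopic.Quotient y y₂) = ⟦α'⟧ := by
        refine Quotient.sound ⟨?_⟩
        refine ⟨⟨G, by simpa using hGl, by simpa using hGr⟩, ?_⟩
        intro s t ht
        rcases ht with rfl | ht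
        · simpa [hG0 s] using (α.source).symm
        · rw [Set.mem_singleton_iff] at ht
          subst ht
          simpa using hG1 s
      rw [hquot]
    · -- surjectivity
      rintro ⟨x₂, q⟩
      obtain ⟨β, rfl⟩ := Quotient.exists_rep q
      obtain ⟨γ, hγ0, hγc⟩ := lift_exists hpath y β.toContinuousMap (by simp)
      have hfun : ∀ t, p (γ t) = β t := by
        intro t
        have := congrFun (congrArg (⇑) hγc) t
        simpa using this
      have hx : p (γ 1) = x₂ := by rw [hfun 1]; simp
      subst hx
      refine ⟨⟨γ 1, ⟦⟨γ, hγ0, rfl⟩⟧⟩, ?_⟩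
      simp only [← Path.Homotopic.Quotient.mk_map]
      congr 1
      refine congrArg _ (Path.ext ?_)
      funext t
      simpa using hfun t
  · -- part (b)
    intro y₁ y₂ β
    constructor
    · rintro ⟨q, hq⟩ γ hγ0 hγc
      obtain ⟨α, rfl⟩ := Quotient.exists_rep q
      change (⟦α.map p.continuous⟧ : Path.Homotopic.Quotient _ _) = _ at hq
      obtain ⟨F⟩ : Path.Homotopic (α.map p.continuous) β := Quotient.exact hq
      have hβγ : ∀ t, β t = p (γ t) := by
        intro t
        have := congrFun (congrArg (⇑) hγc) t
        simpa using this.symm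
      obtain ⟨hend, -⟩ :=
        key hpath hhtpy y₁ α.toContinuousMap γ (by simp) hγ0
          F.toHomotopy.toContinuousMap
          (fun s => by
            have := F.eq_fst s (show (0 : I) ∈ ({0, 1} : Set I) from Or.inl rfl)
            simpa using this)
          (fun s => by
            have h1 := F.eq_fst s (show (1 : I) ∈ ({0, 1} : Set I) from Or.inr rfl)
            have h2 := F.eq_fst 0 (show (1 : I) ∈ ({0, 1} : Set I) from Or.inr rfl)
            simp only [ContinuousMap.Homotopy.coe_toContinuousMap,
              ContinuousMap.HomotopyWith.coe_toHomotopy]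
            rw [h1, h2])
          (fun t => by simpa using F.apply_zero t)
          (fun t => by
            have := F.apply_one t
            simp only [ContinuousMap.Homotopy.coe_toContinuousMap,
              ContinuousMap.HomotopyWith.coe_toHomotopy] at this ⊢
            rw [this]; simpa using hβγ t)
      have : α 1 = γ 1 := by simpa using hend
      rw [← this]; simp
    · intro h
      obtain ⟨γ, hγ0, hγc⟩ := lift_exists hpath y₁ β.toContinuousMap (by simp)
      have h1 : γ 1 = y₂ := h γ hγ0 hγc
      refine ⟨⟦⟨γ, hγ0, h1⟩⟧, ?_⟩
      change (⟦(⟨γ, hγ0, h1⟩ : Path y₁ y₂).map p.continuous⟧ : Path.Homotopic.Quotient _ _) = _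
      refine congrArg _ (Path.ext ?_)
      funext t
      have := congrFun (congrArg (⇑) hγc) t
      simpa using this
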